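/- Let p ∈ [1,∞) and let g ∈ ℓ^p(ℕ)^+ be a strictly decreasing sequence with g(i) > 0 for all i ∈ ℕ. Let f ∈ ℓ^p(ℕ)^+ be defined by f(1) = 0 and f(i+1) = g(i) for all i ∈ ℕ (i.e., f = Rg where R is the right shift). Then f ≺_w g, but there is no increasable doubly substochastic operator D on ℓ^p(ℕ) with f = Dg; that is, f is not submajorized by g. -/

import Mathlib

open scoped ENNReal BigOperators

noncomputable section

/-- ℓᵖ(I) with real scalars. -/
abbrev Lp (I : Type*) (p : ℝ≥0∞) := lp (fun _ : I => ℝ) p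

/-- The standard basis vector `e_j` of `ℓᵖ(I)`. -/
def stdVec {I : Type*} (p : ℝ≥0∞) (j : I) : Lp I p :=
  haveI := Classical.decEq I
  lp.single p j 1

/-- A bounded operator on ℓᵖ(I) is positive if it maps the positive cone into itself. -/
def IsPos {I : Type*} {p : ℝ≥0∞} [Fact (1 ≤ p)] (A : Lp I p →L[ℝ] Lp I p) : Prop :=
  ∀ f : Lp I p, (∀ i, 0 ≤ f i) → ∀ i, 0 ≤ A f i

/-- Doubly stochastic operator on ℓᵖ(I). -/
def DoublyStochastic {I : Type*} {p : ℝ≥0∞} [Fact (1 ≤ p)]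
    (A : Lp I p →L[ℝ] Lp I p) : Prop :=
  IsPos A ∧ (∀ i : I, HasSum (fun j : I => A (stdVec p j) i) 1)
          ∧ (∀ j : I, HasSum (fun i : I => A (stdVec p j) i) 1)

/-- Doubly substochastic operator on ℓᵖ(I) (finite partial sums formulation). -/
def DoublySubstochastic {I : Type*} {p : ℝ≥0∞} [Fact (1 ≤ p)]
    (A : Lp I p →L[ℝ] Lp I p) : Prop :=
  IsPos A ∧ (∀ i : I, ∀ s : Finset I, ∑ j ∈ s, A (stdVec p j) i ≤ 1)
          ∧ (∀ j : I, ∀ s : Finset I, ∑ i ∈ s, A (stdVec p j) i ≤ 1)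

/-- Increasable doubly substochastic operator on ℓᵖ(I). -/
def IncreasableDsS {I : Type*} {p : ℝ≥0∞} [Fact (1 ≤ p)]
    (A : Lp I p →L[ℝ] Lp I p) : Prop :=
  IsPos A ∧ ∃ A₁ : Lp I p →L[ℝ] Lp I p, DoublyStochastic A₁ ∧
    ∀ i j : I, A (stdVec p j) i ≤ A₁ (stdVec p j) i

/-- Majorization: `f ≺ g`. -/
def Maj {I : Type*} {p : ℝ≥0∞} [Fact (1 ≤ p)] (f g : Lp I p) : Prop :=
  ∃ D : Lp I p →L[ℝ] Lp I p, DoublyStochastic D ∧ f = D g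

/-- Weak majorization: `f ≺_w g`. -/
def MajW {I : Type*} {p : ℝ≥0∞} [Fact (1 ≤ p)] (f g : Lp I p) : Prop :=
  ∃ D : Lp I p →L[ℝ] Lp I p, DoublySubstochastic D ∧ f = D g

/-- Submajorization: `f ≺_s g`. -/
def MajS {I : Type*} {p : ℝ≥0∞} [Fact (1 ≤ p)] (f g : Lp I p) : Prop :=
  ∃ D : Lp I p →L[ℝ] Lp I p, IncreasableDsS D ∧ f = D g

/-- Permutation operator on ℓᵖ(I). -/
def IsPermutationOp {I : Type*} {p : ℝ≥0∞} [Fact (1 ≤ p)]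
    (P : Lp I p →L[ℝ] Lp I p) : Prop :=
  ∃ θ : I ≃ I, ∀ j : I, P (stdVec p j) = stdVec p (θ j)

/-- `P` is the operator `P_θ` associated with the injection `θ : I → I`,
i.e. `P f = ∑_{k ∈ I} f(k) e_{θ(k)}`. -/
def IsPTheta {I : Type*} {p : ℝ≥0∞} [Fact (1 ≤ p)] (θ : I → I)
    (P : Lp I p →L[ℝ] Lp I p) : Prop :=
  (∀ f : Lp I p, ∀ k : I, P f (θ k) = f k) ∧
  (∀ f : Lp I p, ∀ i : I, i ∉ Set.range θ → P f i = 0)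

/-- `T` preserves weak majorization on the positive cone. -/
def PreservesMajW {I : Type*} {p : ℝ≥0∞} [Fact (1 ≤ p)]
    (T : Lp I p →L[ℝ] Lp I p) : Prop :=
  ∀ f g : Lp I p, (∀ i, 0 ≤ f i) → (∀ i, 0 ≤ g i) → MajW f g → MajW (T f) (T g)

/-- `T` preserves submajorization on the positive cone. -/
def PreservesMajS {I : Type*} {p : ℝ≥0∞} [Fact (1 ≤ p)]
    (T : Lp I p →L[ℝ] Lp I p) : Prop :=
  ∀ f g : Lp I p, (∀ i, 0 ≤ f i) → (∀ i, 0 ≤ g i) → MajS f g → MajS (T f) (T g)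

end


section AuxStmt9

open scoped ENNReal

variable {p : ℝ≥0∞} [Fact (1 ≤ p)]

lemma stdVec_apply' (p : ℝ≥0∞) (j i : ℕ) : (stdVec p j : Lp ℕ p) i = if i = j then 1 else 0 := by
  unfold stdVec
  rw [@lp.single_apply ℕ (fun _ => ℝ) _ (Classical.decEq ℕ) p j 1 i]
  by_cases h : i = j
  · subst h; simp
  · simp [h]

lemma stdVec_nonneg' (p : ℝ≥0∞) [Fact (1 ≤ p)] (j i : ℕ) : 0 ≤ (stdVec p j : Lp ℕ p) i := by
  rw [stdVec_apply']; split <;> norm_num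

lemma p_ne_zero' (p : ℝ≥0∞) [Fact (1 ≤ p)] : p ≠ 0 :=
  (zero_lt_one.trans_le (Fact.out : (1:ℝ≥0∞) ≤ p)).ne'

lemma p_toReal_pos (p : ℝ≥0∞) [Fact (1 ≤ p)] (hp : p ≠ ∞) : 0 < p.toReal :=
  ENNReal.toReal_pos (p_ne_zero' p) hp

/-- Evaluation at a coordinate as a continuous linear functional. -/
noncomputable def evalCLM (p : ℝ≥0∞) [Fact (1 ≤ p)] (i : ℕ) : Lp ℕ p →L[ℝ] ℝ :=
  LinearMap.mkContinuous
    { toFun := fun h => h i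
      map_add' := fun h1 h2 => by
        have h' : (⇑(h1 + h2) : ℕ → ℝ) = ⇑h1 + ⇑h2 := lp.coeFn_add h1 h2
        show (h1 + h2 : Lp ℕ p) i = h1 i + h2 i
        rw [h']; rfl
      map_smul' := fun c h => by
        have h' : (⇑(c • h) : ℕ → ℝ) = c • ⇑h := lp.coeFn_smul c h
        show (c • h : Lp ℕ p) i = c • (h i)
        rw [h']; rfl }
    1 (fun h => by
      rw [one_mul]
      exact lp.norm_apply_le_norm (p_ne_zero' p) h i)

@[simp] lemma evalCLM_apply (p : ℝ≥0∞) [Fact (1 ≤ p)] (i : ℕ) (h : Lp ℕ p) :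
    evalCLM p i h = h i := rfl

lemma single_eq_smul_stdVec (p : ℝ≥0∞) [Fact (1 ≤ p)] (j : ℕ) (a : ℝ) :
    (lp.single p j a : Lp ℕ p) = a • stdVec p j := by
  apply lp.ext
  funext k
  rw [lp.coeFn_smul, Pi.smul_apply, smul_eq_mul, stdVec_apply']
  rw [lp.single_apply]
  by_cases hk : k = j
  · subst hk; simp
  · simp [hk]

/-- Coordinatewise expansion of the action of a bounded operator. -/
lemma hasSum_coord (hp : p ≠ ∞) (D : Lp ℕ p →L[ℝ] Lp ℕ p) (h : Lp ℕ p) (i : ℕ) :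
    HasSum (fun j : ℕ => h j * D (stdVec p j) i) (D h i) := by
  classical
  have h1 : HasSum (fun j : ℕ => lp.single p j (h j)) h := lp.hasSum_single hp h
  have h2 : HasSum (fun j : ℕ => (h j : ℝ) • stdVec p j) h := by
    simpa only [single_eq_smul_stdVec] using h1
  have h3 := ((evalCLM p i).comp D).hasSum h2
  have h4 : ∀ j : ℕ, ((evalCLM p i).comp D) ((h j : ℝ) • stdVec p j)
      = h j * D (stdVec p j) i := by
    intro j
    rw [ContinuousLinearMap.comp_apply, map_smul, evalCLM_apply, lp.coeFn_smul]
    rfl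
  simpa only [h4, ContinuousLinearMap.comp_apply, evalCLM_apply] using h3

/-- The shift of a sequence. -/
def shiftFun (h : ℕ → ℝ) : ℕ → ℝ
  | 0 => 0
  | n + 1 => h n

lemma shift_memℓp (hp : p ≠ ∞) (h : Lp ℕ p) : Memℓp (shiftFun h) p := by
  have hpt : 0 < p.toReal := p_toReal_pos p hp
  apply memℓp_gen
  have hs : Summable fun i : ℕ => ‖h i‖ ^ p.toReal := (lp.memℓp h).summable hpt
  have h1 : Summable fun n : ℕ => ‖shiftFun (⇑h) (n + 1)‖ ^ p.toReal := by
    simpa [shiftFun] using hs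
  exact (summable_nat_add_iff 1).mp h1

noncomputable def shiftLM (p : ℝ≥0∞) [Fact (1 ≤ p)] (hp : p ≠ ∞) :
    Lp ℕ p →ₗ[ℝ] Lp ℕ p where
  toFun h := ⟨shiftFun h, shift_memℓp hp h⟩
  map_add' h1 h2 := by
    apply lp.ext
    funext i
    have : (⇑(h1 + h2) : ℕ → ℝ) = ⇑h1 + ⇑h2 := lp.coeFn_add h1 h2
    show shiftFun (⇑(h1 + h2)) i = shiftFun (⇑h1) i + shiftFun (⇑h2) i
    rw [this]
    cases i <;> simp [shiftFun]
  map_smul' c h := by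
    apply lp.ext
    funext i
    have : (⇑(c • h) : ℕ → ℝ) = c • ⇑h := lp.coeFn_smul c h
    show shiftFun (⇑(c • h)) i = c • shiftFun (⇑h) i
    rw [this]
    cases i <;> simp [shiftFun]

lemma shiftLM_norm (hp : p ≠ ∞) (h : Lp ℕ p) : ‖shiftLM p hp h‖ = ‖h‖ := by
  have hpt : 0 < p.toReal := p_toReal_pos p hp
  have hcoe : (⇑(shiftLM p hp h) : ℕ → ℝ) = shiftFun (⇑h) := rfl
  have hs2 : Summable fun i : ℕ => ‖shiftFun (⇑h) i‖ ^ p.toReal :=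
    (shift_memℓp hp h).summable hpt
  have key : ‖shiftLM p hp h‖ ^ p.toReal = ‖h‖ ^ p.toReal := by
    rw [lp.norm_rpow_eq_tsum hpt, lp.norm_rpow_eq_tsum hpt]
    simp only [hcoe]
    rw [← Summable.sum_add_tsum_nat_add 1 hs2]
    simp [shiftFun, Real.zero_rpow hpt.ne']
  exact Real.rpow_left_injOn hpt.ne'
    (Set.mem_setOf.2 (norm_nonneg _)) (Set.mem_setOf.2 (norm_nonneg _)) key

/-- The right-shift operator on `ℓᵖ(ℕ)`. -/
noncomputable def shiftOp (p : ℝ≥0∞) [Fact (1 ≤ p)] (hp : p ≠ ∞) :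
    Lp ℕ p →L[ℝ] Lp ℕ p :=
  LinearMap.mkContinuous (shiftLM p hp) 1
    (fun h => by rw [one_mul, shiftLM_norm hp h])

lemma shiftOp_apply (hp : p ≠ ∞) (h : Lp ℕ p) (i : ℕ) :
    (shiftOp p hp h : Lp ℕ p) i = shiftFun (⇑h) i := rfl

lemma shiftOp_stdVec (hp : p ≠ ∞) (j i : ℕ) :
    (shiftOp p hp (stdVec p j) : Lp ℕ p) i = if i = j + 1 then 1 else 0 := by
  rw [shiftOp_apply]
  cases i with
  | zero => simp [shiftFun]
  | succ n => rw [shiftFun, stdVec_apply']; simp [Nat.succ_inj]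

/-- The key rearrangement-style extremal lemma over the reals. -/
lemma key_col_sum (g : ℕ → ℝ) (hgpos : ∀ i, 0 < g i)
    (hgdec : ∀ i j : ℕ, i < j → g j < g i) (n : ℕ) (c : ℕ → ℝ)
    (hc0 : ∀ j, 0 ≤ c j) (hc1 : ∀ j, c j ≤ 1)
    (hcS : ∀ s : Finset ℕ, ∑ j ∈ s, c j ≤ n + 1)
    (hu : HasSum (fun j : ℕ => g j * c j) (∑ k ∈ Finset.range (n+1), g k)) :
    ∀ j ≤ n, c j = 1 := by
  have hcsum : Summable c :=
    summable_of_sum_range_le hc0 (fun k => hcS (Finset.range k))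
  have htsum_le : ∑' j, c j ≤ n + 1 := Summable.tsum_le_of_sum_le hcsum hcS
  have hsplit := Summable.sum_add_tsum_nat_add (f := c) (n+1) hcsum
  have husum : Summable (fun j : ℕ => g j * c j) := hu.summable
  have hgle : ∀ j : ℕ, g (j + (n+1)) ≤ g (n+1) := by
    intro j
    cases j with
    | zero => simp
    | succ m => exact (hgdec (n+1) (m+1+(n+1)) (by omega)).le
  have hshift_c : Summable (fun j : ℕ => c (j + (n+1))) :=
    (summable_nat_add_iff (n+1)).mpr hcsum
  have hshift_u : Summable (fun j : ℕ => g (j + (n+1)) * c (j + (n+1))) :=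
    (summable_nat_add_iff (f := fun j : ℕ => g j * c j) (n+1)).mpr husum
  have htail : ∑' j : ℕ, g (j + (n+1)) * c (j + (n+1))
      ≤ g (n+1) * ∑' j : ℕ, c (j + (n+1)) := by
    rw [← tsum_mul_left]
    exact Summable.tsum_le_tsum
      (fun j => mul_le_mul_of_nonneg_right (hgle j) (hc0 _))
      hshift_u (hshift_c.mul_left _)
  have hsum_split := Summable.sum_add_tsum_nat_add (f := fun j : ℕ => g j * c j) (n+1) husum
  rw [hu.tsum_eq] at hsum_split
  have hTbound : ∑' j : ℕ, c (j + (n+1)) ≤ (n+1) - ∑ j ∈ Finset.range (n+1), c j := by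
    linarith [hsplit, htsum_le]
  have hGpos : (0:ℝ) < g (n+1) := hgpos (n+1)
  have hA_le : ∑ k ∈ Finset.range (n+1), g k
      ≤ ∑ k ∈ Finset.range (n+1), (g k * c k + g (n+1) * (1 - c k)) := by
    have e1 : ∑ k ∈ Finset.range (n+1), (g k * c k + g (n+1) * (1 - c k))
        = (∑ k ∈ Finset.range (n+1), g k * c k)
          + g (n+1) * ((n+1) - ∑ k ∈ Finset.range (n+1), c k) := by
      rw [Finset.sum_add_distrib, ← Finset.mul_sum]
      congr 1
      congr 1
      rw [Finset.sum_sub_distrib]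
      simp
    rw [e1]
    have h3 : g (n+1) * (∑' j : ℕ, c (j + (n+1)))
        ≤ g (n+1) * ((n+1) - ∑ k ∈ Finset.range (n+1), c k) :=
      mul_le_mul_of_nonneg_left hTbound hGpos.le
    linarith [hsum_split, htail]
  intro j hj
  by_contra hne
  have hjlt : c j < 1 := lt_of_le_of_ne (hc1 j) hne
  have hterm : ∀ k ∈ Finset.range (n+1),
      g k * c k + g (n+1) * (1 - c k) ≤ g k := by
    intro k hk
    have hkG : g (n+1) ≤ g k := (hgdec k (n+1) (by simp at hk; omega)).le
    nlinarith [hc1 k, hc0 k]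
  have hstrict : g j * c j + g (n+1) * (1 - c j) < g j := by
    have hGj : g (n+1) < g j := hgdec j (n+1) (by omega)
    nlinarith
  have hlt : ∑ k ∈ Finset.range (n+1), (g k * c k + g (n+1) * (1 - c k))
      < ∑ k ∈ Finset.range (n+1), g k :=
    Finset.sum_lt_sum hterm ⟨j, Finset.mem_range.2 (by omega), hstrict⟩
  linarith

end AuxStmt9

theorem stmt_9 (p : ℝ≥0∞) [Fact (1 ≤ p)] (hp : p ≠ ∞)
    (g f : Lp ℕ p) (hgpos : ∀ i, 0 < g i) (hgdec : ∀ i j : ℕ, i < j → g j < g i)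
    (hf0 : f 0 = 0) (hf : ∀ i : ℕ, f (i + 1) = g i) :
    MajW f g ∧ ¬ MajS f g := by
  constructor
  · -- weak majorization via the right shift
    refine ⟨shiftOp p hp, ⟨?_, ?_, ?_⟩, ?_⟩
    · intro h hh i
      rw [shiftOp_apply]
      cases i with
      | zero => simp [shiftFun]
      | succ n => exact hh n
    · intro i s
      calc ∑ j ∈ s, (shiftOp p hp) (stdVec p j) i
          = ∑ j ∈ s, (if i = j + 1 then (1:ℝ) else 0) := by
            exact Finset.sum_congr rfl fun j _ => shiftOp_stdVec hp j i
        _ ≤ 1 := by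
            cases i with
            | zero => simp
            | succ n =>
              have : ∀ j ∈ s, (if n + 1 = j + 1 then (1:ℝ) else 0)
                  = if j = n then (1:ℝ) else 0 := by
                intro j _
                simp [Nat.succ_inj, eq_comm]
              rw [Finset.sum_congr rfl this, Finset.sum_ite_eq' s n (fun _ => (1:ℝ))]
              split <;> norm_num
    · intro j s
      calc ∑ i ∈ s, (shiftOp p hp) (stdVec p j) i
          = ∑ i ∈ s, (if i = j + 1 then (1:ℝ) else 0) := by
            exact Finset.sum_congr rfl fun i _ => shiftOp_stdVec hp j i
        _ ≤ 1 := by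
            rw [Finset.sum_ite_eq' s (j+1) (fun _ => (1:ℝ))]
            split <;> norm_num
    · apply lp.ext
      funext i
      cases i with
      | zero => rw [shiftOp_apply]; exact hf0
      | succ n => rw [shiftOp_apply]; exact hf n
  · -- no increasable doubly substochastic operator works
    rintro ⟨D, ⟨hDpos, A₁, ⟨hA₁pos, hA₁row, hA₁col⟩, hle⟩, hfDg⟩
    have hd0 : ∀ i j : ℕ, 0 ≤ D (stdVec p j) i :=
      fun i j => hDpos _ (stdVec_nonneg' p j) i
    have ha0 : ∀ i j : ℕ, 0 ≤ A₁ (stdVec p j) i :=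
      fun i j => hA₁pos _ (stdVec_nonneg' p j) i
    have hrow : ∀ i : ℕ, ∀ s : Finset ℕ, ∑ j ∈ s, D (stdVec p j) i ≤ 1 := fun i s =>
      le_trans (Finset.sum_le_sum fun j _ => hle i j)
        (sum_le_hasSum s (fun j _ => ha0 i j) (hA₁row i))
    have hcol : ∀ j : ℕ, ∀ s : Finset ℕ, ∑ i ∈ s, D (stdVec p j) i ≤ 1 := fun j s =>
      le_trans (Finset.sum_le_sum fun i _ => hle i j)
        (sum_le_hasSum s (fun i _ => ha0 i j) (hA₁col j))
    have hcoord : ∀ i : ℕ, HasSum (fun j : ℕ => g j * D (stdVec p j) i) (f i) := by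
      intro i
      have := hasSum_coord hp D g i
      rwa [show (D g : Lp ℕ p) i = f i by rw [hfDg]] at this
    -- row 0 of D vanishes
    have hrow0 : ∀ j : ℕ, D (stdVec p j) 0 = 0 := by
      have h0 : HasSum (fun j : ℕ => g j * D (stdVec p j) 0) 0 := by
        have := hcoord 0; rwa [hf0] at this
      have hz := (hasSum_zero_iff_of_nonneg
        (fun j => mul_nonneg (hgpos j).le (hd0 0 j))).mp h0
      intro j
      have hzj : g j * D (stdVec p j) 0 = 0 := congrFun hz j
      exact (mul_eq_zero.mp hzj).resolve_left (hgpos j).ne'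
    -- key: full column mass within the first rows
    have hkey : ∀ n : ℕ, ∀ j ≤ n, ∑ i ∈ Finset.range (n+2), D (stdVec p j) i = 1 := by
      intro n
      refine key_col_sum g (fun i => hgpos i) hgdec n _
        (fun j => Finset.sum_nonneg fun i _ => hd0 i j)
        (fun j => hcol j _) ?_ ?_
      · intro s
        rw [Finset.sum_comm, Finset.sum_range_succ']
        have hF0 : ∑ j ∈ s, D (stdVec p j) 0 = 0 := by simp [hrow0]
        rw [hF0, add_zero]
        calc ∑ i ∈ Finset.range (n+1), ∑ j ∈ s, D (stdVec p j) (i+1)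
            ≤ ∑ i ∈ Finset.range (n+1), (1:ℝ) :=
              Finset.sum_le_sum fun i _ => hrow (i+1) s
          _ = n + 1 := by simp
      · have h1 : HasSum (fun j : ℕ => ∑ i ∈ Finset.range (n+2), g j * D (stdVec p j) i)
            (∑ i ∈ Finset.range (n+2), f i) := hasSum_sum fun i _ => hcoord i
        have h2 : ∑ i ∈ Finset.range (n+2), f i = ∑ k ∈ Finset.range (n+1), g k := by
          rw [Finset.sum_range_succ']
          simp [hf, hf0]
        rw [h2] at h1
        simpa only [← Finset.mul_sum] using h1
    -- columns of D are supported in finitely many rows with total mass 1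
    have hcol_zero : ∀ j i : ℕ, i ∉ Finset.range (j+2) → D (stdVec p j) i = 0 := by
      intro j i hi
      have h1 : ∑ i' ∈ insert i (Finset.range (j+2)), D (stdVec p j) i' ≤ 1 := hcol j _
      rw [Finset.sum_insert hi, hkey j j le_rfl] at h1
      linarith [hd0 i j]
    have hcolHasSum : ∀ j : ℕ, HasSum (fun i : ℕ => D (stdVec p j) i) 1 := by
      intro j
      have h1 := hasSum_sum_of_ne_finset_zero (L := SummationFilter.unconditional ℕ) (s := Finset.range (j+2))
        (f := fun i : ℕ => D (stdVec p j) i) (hcol_zero j)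
      rwa [hkey j j le_rfl] at h1
    -- hence A₁ = D entrywise, contradicting row 0 of A₁
    have haeqd : ∀ j i : ℕ, A₁ (stdVec p j) i = D (stdVec p j) i := by
      intro j i
      have hz : HasSum (fun i : ℕ => A₁ (stdVec p j) i - D (stdVec p j) i) 0 := by
        simpa using (hA₁col j).sub (hcolHasSum j)
      have h1 := (hasSum_zero_iff_of_nonneg
        (fun i => sub_nonneg.2 (hle i j))).mp hz
      have h2 := congrFun h1 i
      simpa [sub_eq_zero] using h2
    have hfinal : HasSum (fun _ : ℕ => (0:ℝ)) 1 := by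
      have h0 : (fun j : ℕ => A₁ (stdVec p j) 0) = fun _ : ℕ => (0:ℝ) :=
        funext fun j => (haeqd j 0).trans (hrow0 j)
      have := hA₁row 0
      rwa [h0] at this
    exact one_ne_zero (hfinal.unique hasSum_zero)
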